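/- Let d ≥ 2, let the extended FGM density c on [0,1]^d with parameters λ^(k)_M be given, and let P ⊆ {1,…,d} with |P| ≥ 2. Then integrating c(u₁,…,u_d) over the coordinates u_m for m ∉ P (each over [0,1]) yields the marginal density 1 + ∑_{k=1}^2 ∑_{j=2}^{|P|} ∑_{M ⊆ P, |M| = j} λ^(k)_M ∏_{m ∈ M} φ_k(u_m), as a function of (u_s)_{s ∈ P}. -/

import Mathlib

open MeasureTheory ProbabilityTheory Real Finset

/-- The shifted Legendre-type functions: `φ₁(x) = √3 (2x − 1)` and
`φ₂(x) = √5 (6x² − 6x + 1)`. -/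
noncomputable def phiFGM (k : ℕ) (x : ℝ) : ℝ :=
  if k = 1 then Real.sqrt 3 * (2 * x - 1) else Real.sqrt 5 * (6 * x ^ 2 - 6 * x + 1)

/-- Antiderivatives: `Φ₁(x) = √3 (x² − x)` and `Φ₂(x) = √5 (2x³ − 3x² + x)`. -/
noncomputable def PhiFGM (k : ℕ) (x : ℝ) : ℝ :=
  if k = 1 then Real.sqrt 3 * (x ^ 2 - x) else Real.sqrt 5 * (2 * x ^ 3 - 3 * x ^ 2 + x)

/-- The density of the extended `d`-variate FGM copula with parameters `lam k M`:
`c(u) = 1 + ∑_{k=1}^2 ∑_{M ⊆ {1,…,d}, |M| ≥ 2} λ^(k)_M ∏_{m ∈ M} φ_k(u_m)`. -/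
noncomputable def fgmDensity (d : ℕ) (lam : ℕ → Finset (Fin d) → ℝ) (u : Fin d → ℝ) : ℝ :=
  1 + ∑ k ∈ Finset.Icc 1 2, ∑ M ∈ Finset.univ.powerset.filter (fun M : Finset (Fin d) => 2 ≤ M.card),
      lam k M * ∏ m ∈ M, phiFGM k (u m)

/-- The admissibility constraint
`∑_{j=2}^d [ (√3)^j ∑_{|M|=j} |λ^(1)_M| + (√5)^j ∑_{|M|=j} |λ^(2)_M| ] ≤ 1`. -/
def fgmAdmissible (d : ℕ) (lam : ℕ → Finset (Fin d) → ℝ) : Prop :=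
  ∑ M ∈ Finset.univ.powerset.filter (fun M : Finset (Fin d) => 2 ≤ M.card),
      (Real.sqrt 3 ^ M.card * |lam 1 M| + Real.sqrt 5 ^ M.card * |lam 2 M|) ≤ 1

lemma phi_cont (k : ℕ) : Continuous (phiFGM k) := by
  unfold phiFGM; split <;> fun_prop

lemma phi_hasDeriv (k : ℕ) (x : ℝ) : HasDerivAt (PhiFGM k) (phiFGM k x) x := by
  unfold phiFGM PhiFGM; split
  · have := (((hasDerivAt_pow 2 x).sub (hasDerivAt_id x)).const_mul (Real.sqrt 3))
    exact this.congr_deriv (by norm_num)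
  · have := ((((hasDerivAt_pow 3 x).const_mul (2:ℝ)).sub ((hasDerivAt_pow 2 x).const_mul 3)).add
      (hasDerivAt_id x)).const_mul (Real.sqrt 5)
    exact this.congr_deriv (by norm_num; ring)

lemma integral_phi (k : ℕ) :
    ∫ x, phiFGM k x ∂(volume.restrict (Set.Icc (0:ℝ) 1)) = 0 := by
  have h1 : ∫ x in Set.Icc (0:ℝ) 1, phiFGM k x = ∫ x in (0:ℝ)..1, phiFGM k x := by
    rw [intervalIntegral.integral_of_le zero_le_one, MeasureTheory.integral_Icc_eq_integral_Ioc]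
  rw [h1, intervalIntegral.integral_eq_sub_of_hasDerivAt (fun x _ => phi_hasDeriv k x)
    ((phi_cont k).intervalIntegrable _ _)]
  unfold PhiFGM; split <;> norm_num

lemma integral_pi_prod {ι α : Type*} [Fintype ι] [MeasurableSpace α] (μ : Measure α)
    [SigmaFinite μ] (f : ι → α → ℝ) :
    ∫ x : ι → α, ∏ i, f i (x i) ∂(Measure.pi fun _ => μ) = ∏ i, ∫ x, f i x ∂μ := by
  letI : MeasureSpace α := ⟨μ⟩
  haveI : SigmaFinite (volume : Measure α) := inferInstanceAs (SigmaFinite μ)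
  have := MeasureTheory.integral_fintype_prod_eq_prod (𝕜 := ℝ) (E := fun _ : ι => α) f (μ := fun _ => μ)
  simpa [MeasureTheory.volume_pi] using this

lemma integrable_pi_prod {ι α : Type*} [Fintype ι] [MeasurableSpace α] (μ : Measure α)
    [SigmaFinite μ] {f : ι → α → ℝ} (hf : ∀ i, Integrable (f i) μ) :
    Integrable (fun x : ι → α => ∏ i, f i (x i)) (Measure.pi fun _ => μ) := by
  letI : MeasureSpace α := ⟨μ⟩
  haveI : SigmaFinite (volume : Measure α) := inferInstanceAs (SigmaFinite μ)
  have := MeasureTheory.Integrable.fintype_prod_dep (𝕜 := ℝ) (E := fun _ : ι => α) hf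
  simpa [MeasureTheory.volume_pi] using this

set_option maxHeartbeats 1000000 in
theorem stmt_5 (d : ℕ) (hd : 2 ≤ d) (lam : ℕ → Finset (Fin d) → ℝ)
    (P : Finset (Fin d)) (hP : 2 ≤ P.card) (u : Fin d → ℝ)
    (hu : ∀ s ∈ P, u s ∈ Set.Icc (0:ℝ) 1) :
    ∫ w : {m : Fin d // m ∉ P} → ℝ,
        fgmDensity d lam (fun m => if h : m ∈ P then u m else w ⟨m, h⟩)
        ∂(Measure.pi fun _ : {m : Fin d // m ∉ P} => volume.restrict (Set.Icc (0:ℝ) 1)) =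
      1 + ∑ k ∈ Finset.Icc 1 2, ∑ M ∈ P.powerset.filter (fun M : Finset (Fin d) => 2 ≤ M.card),
          lam k M * ∏ m ∈ M, phiFGM k (u m) := by
  set μ : Measure ℝ := volume.restrict (Set.Icc (0:ℝ) 1) with hμ
  haveI : IsProbabilityMeasure μ := ⟨by simp [hμ, Real.volume_Icc]⟩
  -- split the product over M into the part inside P and the part outside
  have hsplit : ∀ (k : ℕ) (M : Finset (Fin d)) (w : {m : Fin d // m ∉ P} → ℝ),
      (∏ m ∈ M, phiFGM k (if h : m ∈ P then u m else w ⟨m, h⟩)) =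
      (∏ m ∈ M ∩ P, phiFGM k (u m)) * ∏ i : {m : Fin d // m ∉ P}, (if (i : Fin d) ∈ M then phiFGM k (w i) else 1) := by
    intro k M w
    rw [← Finset.prod_inter_mul_prod_diff M P]
    congr 1
    · exact Finset.prod_congr rfl fun m hm => by rw [dif_pos (Finset.mem_inter.mp hm).2]
    · rw [← Finset.prod_filter]
      refine Finset.prod_bij (fun m hm => (⟨m, (Finset.mem_sdiff.mp hm).2⟩ : {m : Fin d // m ∉ P})) ?_ ?_ ?_ ?_
      · intro m hm; simp [(Finset.mem_sdiff.mp hm).1]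
      · intro a ha b hb h; exact Subtype.mk_eq_mk.mp h
      · intro i hi; exact ⟨i.1, Finset.mem_sdiff.mpr ⟨(Finset.mem_filter.mp hi).2, i.2⟩, rfl⟩
      · intro m hm; rw [dif_neg (Finset.mem_sdiff.mp hm).2]
  have hIntProd : ∀ (k : ℕ) (M : Finset (Fin d)),
      Integrable (fun w : {m : Fin d // m ∉ P} → ℝ => ∏ i : {m : Fin d // m ∉ P}, (if (i : Fin d) ∈ M then phiFGM k (w i) else 1))
        (Measure.pi fun _ : {m : Fin d // m ∉ P} => μ) := by
    intro k M
    refine integrable_pi_prod μ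
      (f := fun (i : {m : Fin d // m ∉ P}) x => if (i : Fin d) ∈ M then phiFGM k x else 1)
      fun i => ?_
    split_ifs
    · have h2 : IntegrableOn (phiFGM k) (Set.Icc (0:ℝ) 1) volume := (phi_cont k).integrableOn_Icc
      exact h2
    · exact integrable_const 1
  have hpi : ∀ (k : ℕ) (M : Finset (Fin d)),
      (∫ w : {m : Fin d // m ∉ P} → ℝ,
          ∏ i : {m : Fin d // m ∉ P}, (if (i : Fin d) ∈ M then phiFGM k (w i) else 1)
          ∂(Measure.pi fun _ : {m : Fin d // m ∉ P} => μ)) =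
        ∏ i : {m : Fin d // m ∉ P}, ∫ x, (if (i : Fin d) ∈ M then phiFGM k x else 1) ∂μ :=
    fun k M => integral_pi_prod μ
      (fun (i : {m : Fin d // m ∉ P}) x => if (i : Fin d) ∈ M then phiFGM k x else 1)
  have hval : ∀ (k : ℕ) (M : Finset (Fin d)),
      (∏ i : {m : Fin d // m ∉ P}, ∫ x, (if (i : Fin d) ∈ M then phiFGM k x else 1) ∂μ) =
        if M ⊆ P then 1 else 0 := by
    intro k M
    have hi : ∀ i : {m : Fin d // m ∉ P}, (∫ x, (if (i : Fin d) ∈ M then phiFGM k x else 1) ∂μ) =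
        if (i : Fin d) ∈ M then 0 else 1 := by
      intro i; split_ifs with h
      · exact integral_phi k
      · simp
    rw [Finset.prod_congr rfl fun i _ => hi i]
    by_cases hMP : M ⊆ P
    · rw [if_pos hMP]
      exact Finset.prod_eq_one fun i _ => if_neg fun h => i.2 (hMP h)
    · rw [if_neg hMP]
      obtain ⟨m, hmM, hmP⟩ := Finset.not_subset.mp hMP
      exact Finset.prod_eq_zero (Finset.mem_univ (⟨m, hmP⟩ : {m : Fin d // m ∉ P})) (if_pos hmM)
  simp only [fgmDensity]
  simp_rw [hsplit, ← mul_assoc]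
  rw [integral_add (integrable_const 1) (integrable_finset_sum _ fun k _ =>
    integrable_finset_sum _ fun M _ => (hIntProd k M).const_mul _)]
  rw [integral_finset_sum _ fun k _ =>
    integrable_finset_sum _ fun M _ => (hIntProd k M).const_mul _]
  simp_rw [integral_finset_sum _ fun M _ => (hIntProd _ M).const_mul _,
    MeasureTheory.integral_const_mul, hpi, hval]
  congr 1
  · simp
  refine Finset.sum_congr rfl fun k _ => ?_
  have hterm : ∀ M : Finset (Fin d),
      (lam k M * ∏ m ∈ M ∩ P, phiFGM k (u m)) * (if M ⊆ P then (1:ℝ) else 0) =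
      if M ⊆ P then lam k M * ∏ m ∈ M, phiFGM k (u m) else 0 := by
    intro M; split_ifs with h
    · rw [Finset.inter_eq_left.mpr h]; ring
    · ring
  simp_rw [hterm]
  rw [← Finset.sum_filter]
  apply Finset.sum_congr _ fun M _ => rfl
  ext M
  simp only [Finset.mem_filter, Finset.mem_powerset, Finset.mem_univ, Finset.subset_univ,
    true_and]
  tauto
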